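/- Suppose linear operators I₁, I₃ on a finite-dimensional complex vector space satisfy the relation I₃² I₁ + (q+q^{−1}) I₃ I₁ I₃ + I₁ I₃² = I₁ + (q^{1/2}+q^{−1/2}) ι₂ I₃ + ι₁, and v, w are eigenvectors of I₃ with eigenvalues λ, λ'. If λ'² + (q+q^{−1})λ'λ + λ² − 1 ≠ 0 and λ ≠ λ', then the component of I₁ v along w (in an eigenbasis of I₃ with distinct eigenvalues) vanishes; equivalently, for a diagonalizable I₃ with simple spectrum {λ_n}, the matrix element (I₁)_{kn} in the eigenbasis of I₃ vanishes whenever λ_k² + (q+q^{−1})λ_kλ_n + λ_n² ≠ 1. -/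
import Mathlib


open Matrix

theorem stmt_9 (q : ℝ) (hq : 0 < q) (ι₁ ι₂ : ℂ) (N : ℕ)
    (lam : Fin N → ℂ) (hlam : Function.Injective lam)
    (I₁ : Matrix (Fin N) (Fin N) ℂ)
    (I₃ : Matrix (Fin N) (Fin N) ℂ) (hI₃ : I₃ = Matrix.diagonal lam)
    (hrel : I₃ ^ 2 * I₁ + ((q + q⁻¹ : ℝ) : ℂ) • (I₃ * I₁ * I₃) + I₁ * I₃ ^ 2
      = I₁ + (((Real.sqrt q + (Real.sqrt q)⁻¹ : ℝ) : ℂ) * ι₂) • I₃ + ι₁ • (1 : Matrix (Fin N) (Fin N) ℂ)) :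
    ∀ k n : Fin N, k ≠ n →
      lam k ^ 2 + ((q + q⁻¹ : ℝ) : ℂ) * lam k * lam n + lam n ^ 2 ≠ 1 →
      I₁ k n = 0 := by
  intro k n hkn hne
  subst hI₃
  have h := congrFun (congrFun (congrArg (fun M => M) hrel) k) n
  simp only [pow_two, Matrix.diagonal_mul_diagonal, Matrix.add_apply, Matrix.smul_apply,
    Matrix.diagonal_mul, Matrix.mul_diagonal, Matrix.mul_assoc, Matrix.diagonal_apply,
    Matrix.one_apply, if_neg hkn, smul_eq_mul] at h
  -- h : lam k * (lam k * I₁ k n) + c * (lam k * (I₁ k n * lam n)) + I₁ k n * (lam n * lam n) = I₁ k n + ...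
  have key : (lam k ^ 2 + ((q + q⁻¹ : ℝ) : ℂ) * lam k * lam n + lam n ^ 2 - 1) * I₁ k n = 0 := by
    ring_nf
    ring_nf at h
    linear_combination h
  rcases mul_eq_zero.mp key with h' | h'
  · exact absurd (by linear_combination h') hne
  · exact h'
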